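/- Let k be a positive integer, t a real number with t ∉ {0, 1, −1}, and λ1, λ2, λ3, λ4 integers with 0 ≤ λi ≤ k and λ1+λ2 ≡ λ3+λ4 (mod 2). With δ1 = |λ1−λ2|, δ2 = min(λ1+λ2, 2k−λ1−λ2), δ3 = |λ3−λ4|, δ4 = min(λ3+λ4, 2k−λ3−λ4), L1 = min(δ1,δ3), L2 = max(δ1,δ3), L3 = min(δ2,δ4), L4 = max(δ2,δ4), assume L2 ≤ L3. Then ∑_{ν=0}^{k} f^{λ1λ2ν} · f^{λ3λ4ν} · d_ν = ((L3−L2)/2 + 1)/(1−t) + 2t/(1−t)² + ( t^{(L1+L2)/2} + t^{(L2−L1)/2} + t^{k−(L3+L4)/2} + t^{(L4−L3)/2} ) / ( (1 − t^{−1})(1 − t²) ). -/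

import Mathlib

set_option maxHeartbeats 1000000


/-- `Δλ = max(d0, d1, d2, d3)` where `d0 = λ1+λ2+λ3−2k`, `d1 = λ1−λ2−λ3`,
`d2 = λ2−λ3−λ1`, `d3 = λ3−λ1−λ2`. -/
def deltaLam (k l1 l2 l3 : ℕ) : ℤ :=
  max (max ((l1 : ℤ) + l2 + l3 - 2 * k) ((l1 : ℤ) - l2 - l3))
    (max ((l2 : ℤ) - l3 - l1) ((l3 : ℤ) - l1 - l2))

/-- The level-`k` SU(2) fusion coefficient `f^{λ1λ2λ3}`: `0` if `λ1+λ2+λ3` is odd,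
`1` if it is even and `Δλ ≤ 0`, and `t^{Δλ/2}` if it is even and `Δλ > 0`. -/
noncomputable def fus (k : ℕ) (t : ℝ) (l1 l2 l3 : ℕ) : ℝ :=
  if (l1 + l2 + l3) % 2 = 1 then 0
  else if deltaLam k l1 l2 l3 ≤ 0 then 1
  else t ^ (deltaLam k l1 l2 l3 / 2).toNat

/-- The cylinder normalization `d_ν`: `1/(1−t²)` if `ν ∈ {0, k}`, else `1/(1−t)`. -/
noncomputable def dcoef (k : ℕ) (t : ℝ) (ν : ℕ) : ℝ :=
  if ν = 0 ∨ ν = k then 1 / (1 - t ^ 2) else 1 / (1 - t)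

/-- Closed form of the four-punctured-sphere partition function
`d_{0,4} = ∑_ν f^{λ1λ2ν} f^{λ3λ4ν} d_ν` in the case `L2 ≤ L3` (nonempty
parabolic moduli space):
`d_{0,4} = ((L3−L2)/2 + 1)/(1−t) + 2t/(1−t)²
  + (t^{(L1+L2)/2} + t^{(L2−L1)/2} + t^{k−(L3+L4)/2} + t^{(L4−L3)/2})/((1−t⁻¹)(1−t²))`. -/
lemma fus_eval (k l1 l2 ν : ℕ) (t : ℝ) (h1 : l1 ≤ k) (h2 : l2 ≤ k)
    (hpar : (l1 + l2 + ν) % 2 = 0) :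
    fus k t l1 l2 ν =
      t ^ ((((l1:ℤ) - l2).natAbs / 2 - ν / 2) + (ν / 2 - min (l1 + l2) (2 * k - l1 - l2) / 2)) := by
  unfold fus deltaLam
  rw [if_neg (by omega)]
  split_ifs with h
  · rw [show (((l1:ℤ) - l2).natAbs / 2 - ν / 2) + (ν / 2 - min (l1 + l2) (2 * k - l1 - l2) / 2) = 0
      from by simp only [max_le_iff] at h; omega, pow_zero]
  · congr 1
    simp only [max_le_iff, not_and_or, not_le] at h
    simp only [max_def]
    split_ifs <;> omega

lemma sum_parity_reindex (k p : ℕ) (hp1 : p ≤ 1) (hpk : p ≤ k) (g : ℕ → ℝ)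
    (hg : ∀ ν, ν % 2 ≠ p % 2 → g ν = 0) :
    ∑ ν ∈ Finset.range (k + 1), g ν = ∑ j ∈ Finset.range ((k - p) / 2 + 1), g (p + 2 * j) := by
  rw [show ∑ j ∈ Finset.range ((k - p) / 2 + 1), g (p + 2 * j)
      = ∑ ν ∈ (Finset.range ((k - p) / 2 + 1)).image (fun j => p + 2 * j), g ν
    from (Finset.sum_image (by intro a _ b _ h; simp only at h; omega)).symm]
  apply (Finset.sum_subset ?_ ?_).symm
  · intro x hx
    simp only [Finset.mem_image, Finset.mem_range] at *
    obtain ⟨a, ha, rfl⟩ := hx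
    omega
  · intro x hx hnx
    apply hg
    intro hparx
    simp only [Finset.mem_image, Finset.mem_range] at hnx hx
    exact hnx ⟨(x - p) / 2, by omega, by omega⟩

lemma core_sum (t : ℝ) (ht1 : t ≠ 1) (ht2 : t ≠ -1) (N m1 m2 m3 m4 : ℕ)
    (h12 : m1 ≤ m2) (h23 : m2 ≤ m3) (h34 : m3 ≤ m4) (h4N : m4 ≤ N) :
    ∑ j ∈ Finset.range (N + 1), t ^ ((m1 - j) + (m2 - j) + (j - m3) + (j - m4)) =
      ((m3 - m2 : ℕ) + 1 : ℝ)
      + (t * (t ^ (m2 - m1) - 1) + t * (t ^ (m4 - m3) - 1)) / (t - 1)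
      + (t ^ (m2 - m1) * t ^ 2 * ((t ^ m1) ^ 2 - 1)
         + t ^ (m4 - m3) * t ^ 2 * ((t ^ (N - m4)) ^ 2 - 1)) / (t ^ 2 - 1) := by
  have ht1' : t - 1 ≠ 0 := sub_ne_zero.mpr ht1
  have ht2' : t ^ 2 - 1 ≠ 0 := by
    intro h
    rcases mul_eq_zero.mp (show (t - 1) * (t + 1) = 0 from by nlinarith) with h' | h'
    · exact ht1 (by linarith)
    · exact ht2 (by linarith)
  have hsq : (t ^ 2 : ℝ) ≠ 1 := by intro h; exact ht2' (by linarith)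
  set f : ℕ → ℝ := fun j => t ^ ((m1 - j) + (m2 - j) + (j - m3) + (j - m4)) with hf
  have split : ∑ j ∈ Finset.range (N + 1), f j =
      ((∑ j ∈ Finset.Ico 0 m1, f j + ∑ j ∈ Finset.Ico m1 m2, f j)
        + ∑ j ∈ Finset.Ico m2 (m3 + 1), f j)
      + (∑ j ∈ Finset.Ico (m3 + 1) (m4 + 1), f j + ∑ j ∈ Finset.Ico (m4 + 1) (N + 1), f j) := by
    have s1 := Finset.sum_Ico_consecutive f (show 0 ≤ m1 from by omega) (show m1 ≤ m2 from by omega)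
    have s2 := Finset.sum_Ico_consecutive f (show 0 ≤ m2 from by omega) (show m2 ≤ m3 + 1 from by omega)
    have s3 := Finset.sum_Ico_consecutive f (show 0 ≤ m3 + 1 from by omega) (show m3 + 1 ≤ m4 + 1 from by omega)
    have s4 := Finset.sum_Ico_consecutive f (show 0 ≤ m4 + 1 from by omega) (show m4 + 1 ≤ N + 1 from by omega)
    rw [Finset.range_eq_Ico, ← s4, ← s3, ← s2, ← s1]; ring
  have p1 : ∑ j ∈ Finset.Ico 0 m1, f j = t ^ (m2 - m1) * t ^ 2 * ((t ^ m1) ^ 2 - 1) / (t ^ 2 - 1) := by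
    have : ∀ j ∈ Finset.range m1, f (m1 - 1 - j) = t ^ (m2 - m1) * t ^ 2 * (t ^ 2) ^ j := by
      intro j hj
      simp only [Finset.mem_range] at hj
      rw [hf]
      simp only
      rw [show (m1 - (m1 - 1 - j)) + (m2 - (m1 - 1 - j)) + ((m1 - 1 - j) - m3) + ((m1 - 1 - j) - m4)
          = (m2 - m1) + 2 + 2 * j from by omega, pow_add, pow_add, pow_mul]
    rw [show Finset.Ico 0 m1 = Finset.range m1 from by rw [Finset.range_eq_Ico],
        ← Finset.sum_range_reflect, Finset.sum_congr rfl this, ← Finset.mul_sum,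
        geom_sum_eq hsq, show ((t:ℝ) ^ 2) ^ m1 = (t ^ m1) ^ 2 from by
          rw [← pow_mul, ← pow_mul, Nat.mul_comm]]
    ring
  have p2 : ∑ j ∈ Finset.Ico m1 m2, f j = t * (t ^ (m2 - m1) - 1) / (t - 1) := by
    rw [Finset.sum_Ico_eq_sum_range]
    have : ∀ j ∈ Finset.range (m2 - m1), f (m1 + ((m2 - m1) - 1 - j)) = t * t ^ j := by
      intro j hj
      simp only [Finset.mem_range] at hj
      rw [hf]
      simp only
      rw [show (m1 - (m1 + ((m2 - m1) - 1 - j))) + (m2 - (m1 + ((m2 - m1) - 1 - j)))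
          + ((m1 + ((m2 - m1) - 1 - j)) - m3) + ((m1 + ((m2 - m1) - 1 - j)) - m4)
          = j + 1 from by omega, pow_add]
      ring
    rw [← Finset.sum_range_reflect, Finset.sum_congr rfl this, ← Finset.mul_sum, geom_sum_eq ht1, mul_div_assoc]
  have p3 : ∑ j ∈ Finset.Ico m2 (m3 + 1), f j = ((m3 - m2 : ℕ) + 1 : ℝ) := by
    have : ∀ j ∈ Finset.Ico m2 (m3 + 1), f j = 1 := by
      intro j hj
      simp only [Finset.mem_Ico] at hj
      rw [hf]
      simp only
      rw [show (m1 - j) + (m2 - j) + (j - m3) + (j - m4) = 0 from by omega, pow_zero]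
    rw [Finset.sum_congr rfl this, Finset.sum_const, Nat.card_Ico, nsmul_eq_mul, mul_one]
    norm_cast
    omega
  have p4 : ∑ j ∈ Finset.Ico (m3 + 1) (m4 + 1), f j = t * (t ^ (m4 - m3) - 1) / (t - 1) := by
    rw [Finset.sum_Ico_eq_sum_range]
    have : ∀ j ∈ Finset.range ((m4 + 1) - (m3 + 1)), f ((m3 + 1) + j) = t * t ^ j := by
      intro j hj
      simp only [Finset.mem_range] at hj
      rw [hf]
      simp only
      rw [show (m1 - ((m3 + 1) + j)) + (m2 - ((m3 + 1) + j)) + (((m3 + 1) + j) - m3)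
          + (((m3 + 1) + j) - m4) = j + 1 from by omega, pow_add]
      ring
    rw [Finset.sum_congr rfl this, ← Finset.mul_sum,
        show (m4 + 1) - (m3 + 1) = m4 - m3 from by omega, geom_sum_eq ht1, mul_div_assoc]
  have p5 : ∑ j ∈ Finset.Ico (m4 + 1) (N + 1), f j
      = t ^ (m4 - m3) * t ^ 2 * ((t ^ (N - m4)) ^ 2 - 1) / (t ^ 2 - 1) := by
    rw [Finset.sum_Ico_eq_sum_range]
    have : ∀ j ∈ Finset.range ((N + 1) - (m4 + 1)), f ((m4 + 1) + j)
        = t ^ (m4 - m3) * t ^ 2 * (t ^ 2) ^ j := by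
      intro j hj
      simp only [Finset.mem_range] at hj
      rw [hf]
      simp only
      rw [show (m1 - ((m4 + 1) + j)) + (m2 - ((m4 + 1) + j)) + (((m4 + 1) + j) - m3)
          + (((m4 + 1) + j) - m4) = (m4 - m3) + 2 + 2 * j from by omega, pow_add, pow_add, pow_mul]
    rw [Finset.sum_congr rfl this, ← Finset.mul_sum,
        show (N + 1) - (m4 + 1) = N - m4 from by omega, geom_sum_eq hsq, show ((t:ℝ) ^ 2) ^ (N - m4) = (t ^ (N - m4)) ^ 2 from by
          rw [← pow_mul, ← pow_mul, Nat.mul_comm], mul_div_assoc]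
  rw [split, p1, p2, p3, p4, p5]
  ring

lemma fus_vanish (k l1 l2 ν p : ℕ) (t : ℝ) (hp : p = (l1 + l2) % 2) (hν : ν % 2 ≠ p % 2) :
    fus k t l1 l2 ν = 0 := by
  unfold fus; rw [if_pos (by omega)]

lemma term_eval (k l1 l2 p j δ1 δ2 : ℕ) (t : ℝ) (h1 : l1 ≤ k) (h2 : l2 ≤ k)
    (hδ1 : δ1 = ((l1 : ℤ) - l2).natAbs)
    (hδ2 : δ2 = min (l1 + l2) (2 * k - l1 - l2))
    (hp : p = (l1 + l2) % 2) :
    fus k t l1 l2 (p + 2 * j) = t ^ ((δ1 / 2 - j) + (j - δ2 / 2)) := by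
  rw [fus_eval k l1 l2 (p + 2 * j) t h1 h2 (by omega), ← hδ1, ← hδ2]
  congr 1
  omega

lemma prep (k l1 l2 p δ1 δ2 : ℕ) (h1 : l1 ≤ k) (h2 : l2 ≤ k)
    (hp : p = (l1 + l2) % 2)
    (hδ1 : δ1 = ((l1 : ℤ) - l2).natAbs)
    (hδ2 : δ2 = min (l1 + l2) (2 * k - l1 - l2)) :
    δ1 % 2 = p ∧ δ2 % 2 = p ∧ δ1 ≤ δ2 ∧ δ2 ≤ k := by
  rcases min_choice (l1 + l2) (2 * k - l1 - l2) with h | h <;> rw [h] at hδ2 <;> omega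

lemma bridge (p δ1 δ2 δ3 δ4 L1 L2 L3 L4 a1 a2 b1 b2 k N : ℕ)
    (hL1 : L1 = min δ1 δ3) (hL2 : L2 = max δ1 δ3)
    (hL3 : L3 = min δ2 δ4) (hL4 : L4 = max δ2 δ4)
    (ha1 : δ1 = p + 2 * a1) (ha2 : δ3 = p + 2 * a2)
    (hb1 : δ2 = p + 2 * b1) (hb2 : δ4 = p + 2 * b2)
    (hL : L2 ≤ L3) (d12 : δ1 ≤ δ2) (d34 : δ3 ≤ δ4) (d2k : δ2 ≤ k) (d4k : δ4 ≤ k)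
    (hN : N = (k - p) / 2) (hp1 : p ≤ 1) :
    ∃ m1 m2 m3 m4, L1 = p + 2 * m1 ∧ L2 = p + 2 * m2 ∧ L3 = p + 2 * m3 ∧ L4 = p + 2 * m4
      ∧ m1 ≤ m2 ∧ m2 ≤ m3 ∧ m3 ≤ m4 ∧ m4 ≤ N
      ∧ ∀ j, (a1 - j) + (j - b1) + ((a2 - j) + (j - b2))
          = m1 - j + (m2 - j) + (j - m3) + (j - m4) := by
  refine ⟨min a1 a2, max a1 a2, min b1 b2, max b1 b2, ?_, ?_, ?_, ?_, ?_, ?_, ?_, ?_, ?_⟩ <;>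
    rcases le_total a1 a2 with h | h <;> rcases le_total b1 b2 with h' | h' <;>
    simp only [min_eq_left, min_eq_right, max_eq_left, max_eq_right, h, h',
      min_def, max_def] <;>
    first
      | omega
      | (intro j; omega)

lemma alg00 (t A X Y Z s : ℝ) (ht0 : t ≠ 0) (h1 : 1 - t ≠ 0) (h2 : 1 - t ^ 2 ≠ 0)
    (hi : 1 - t⁻¹ ≠ 0) :
    ((s + 1) + (t * (X - 1) + t * (Y - 1)) / (t - 1)
        + (X * t ^ 2 * (A - 1) + Y * t ^ 2 * (Z - 1)) / (t ^ 2 - 1)) * (1 / (1 - t))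
      + (X * A * (1 / (1 - t ^ 2) - 1 / (1 - t)) + Y * Z * (1 / (1 - t ^ 2) - 1 / (1 - t)))
    = (s + 1) / (1 - t) + 2 * t / (1 - t) ^ 2
      + (X * A + X + (Y * Z + Y)) / ((1 - t⁻¹) * (1 - t ^ 2)) := by
  have h3 : t - 1 ≠ 0 := fun h => h1 (by linarith)
  have h4 : t ^ 2 - 1 ≠ 0 := fun h => h2 (by linarith)
  field_simp
  ring

lemma alg01 (t A X Y Z s : ℝ) (ht0 : t ≠ 0) (h1 : 1 - t ≠ 0) (h2 : 1 - t ^ 2 ≠ 0)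
    (hi : 1 - t⁻¹ ≠ 0) :
    ((s + 1) + (t * (X - 1) + t * (Y - 1)) / (t - 1)
        + (X * t ^ 2 * (A - 1) + Y * t ^ 2 * (Z - 1)) / (t ^ 2 - 1)) * (1 / (1 - t))
      + X * A * (1 / (1 - t ^ 2) - 1 / (1 - t))
    = (s + 1) / (1 - t) + 2 * t / (1 - t) ^ 2
      + (X * A + X + (Y * Z * t + Y)) / ((1 - t⁻¹) * (1 - t ^ 2)) := by
  have h3 : t - 1 ≠ 0 := fun h => h1 (by linarith)
  have h4 : t ^ 2 - 1 ≠ 0 := fun h => h2 (by linarith)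
  field_simp
  ring

lemma alg10 (t A X Y Z s : ℝ) (ht0 : t ≠ 0) (h1 : 1 - t ≠ 0) (h2 : 1 - t ^ 2 ≠ 0)
    (hi : 1 - t⁻¹ ≠ 0) :
    ((s + 1) + (t * (X - 1) + t * (Y - 1)) / (t - 1)
        + (X * t ^ 2 * (A - 1) + Y * t ^ 2 * (Z - 1)) / (t ^ 2 - 1)) * (1 / (1 - t))
      + Y * Z * (1 / (1 - t ^ 2) - 1 / (1 - t))
    = (s + 1) / (1 - t) + 2 * t / (1 - t) ^ 2
      + (X * A * t + X + (Y * Z + Y)) / ((1 - t⁻¹) * (1 - t ^ 2)) := by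
  have h3 : t - 1 ≠ 0 := fun h => h1 (by linarith)
  have h4 : t ^ 2 - 1 ≠ 0 := fun h => h2 (by linarith)
  field_simp
  ring

lemma alg11 (t A X Y Z s : ℝ) (ht0 : t ≠ 0) (h1 : 1 - t ≠ 0) (h2 : 1 - t ^ 2 ≠ 0)
    (hi : 1 - t⁻¹ ≠ 0) :
    ((s + 1) + (t * (X - 1) + t * (Y - 1)) / (t - 1)
        + (X * t ^ 2 * (A - 1) + Y * t ^ 2 * (Z - 1)) / (t ^ 2 - 1)) * (1 / (1 - t))
    = (s + 1) / (1 - t) + 2 * t / (1 - t) ^ 2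
      + (X * A * t + X + (Y * Z * t + Y)) / ((1 - t⁻¹) * (1 - t ^ 2)) := by
  have h3 : t - 1 ≠ 0 := fun h => h1 (by linarith)
  have h4 : t ^ 2 - 1 ≠ 0 := fun h => h2 (by linarith)
  field_simp
  ring

theorem four_point_function_L2_le_L3 (k : ℕ) (hk : 0 < k) (t : ℝ)
    (ht0 : t ≠ 0) (ht1 : t ≠ 1) (ht2 : t ≠ -1)
    (l1 l2 l3 l4 : ℕ) (h1 : l1 ≤ k) (h2 : l2 ≤ k) (h3 : l3 ≤ k) (h4 : l4 ≤ k)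
    (hpar : (l1 + l2) % 2 = (l3 + l4) % 2)
    (δ1 δ2 δ3 δ4 L1 L2 L3 L4 : ℕ)
    (hδ1 : δ1 = ((l1 : ℤ) - l2).natAbs)
    (hδ2 : δ2 = min (l1 + l2) (2 * k - l1 - l2))
    (hδ3 : δ3 = ((l3 : ℤ) - l4).natAbs)
    (hδ4 : δ4 = min (l3 + l4) (2 * k - l3 - l4))
    (hL1 : L1 = min δ1 δ3) (hL2 : L2 = max δ1 δ3)
    (hL3 : L3 = min δ2 δ4) (hL4 : L4 = max δ2 δ4)
    (hL : L2 ≤ L3) :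
    ∑ ν ∈ Finset.range (k + 1), fus k t l1 l2 ν * fus k t l3 l4 ν * dcoef k t ν =
      (((L3 - L2) / 2 : ℕ) + 1 : ℝ) / (1 - t) + 2 * t / (1 - t) ^ 2 +
        (t ^ ((L1 + L2) / 2) + t ^ ((L2 - L1) / 2) + t ^ (k - (L3 + L4) / 2) +
            t ^ ((L4 - L3) / 2)) / ((1 - t⁻¹) * (1 - t ^ 2)) := by
  have h1t : (1:ℝ) - t ≠ 0 := by intro h; exact ht1 (by linarith)
  have h1t2 : (1:ℝ) - t ^ 2 ≠ 0 := by
    intro h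
    rcases mul_eq_zero.mp (show (1 - t) * (1 + t) = 0 from by nlinarith) with h' | h'
    · exact ht1 (by linarith)
    · exact ht2 (by linarith)
  have hinv : (1:ℝ) - t⁻¹ ≠ 0 := by
    intro h
    have h' : t⁻¹ = 1 := by linarith
    exact ht1 (by rw [← inv_eq_one]; exact h')
  obtain ⟨p, hp⟩ : ∃ p, p = (l1 + l2) % 2 := ⟨_, rfl⟩
  have hp1 : p ≤ 1 := by rw [hp]; exact Nat.le_of_lt_succ (Nat.mod_lt _ (by norm_num))
  obtain ⟨d1p, d2p, d12, d2k⟩ := prep k l1 l2 p δ1 δ2 h1 h2 hp hδ1 hδ2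
  obtain ⟨d3p, d4p, d34, d4k⟩ := prep k l3 l4 p δ3 δ4 h3 h4 (by omega) hδ3 hδ4
  have hvan : ∀ ν, ν % 2 ≠ p % 2 →
      fus k t l1 l2 ν * fus k t l3 l4 ν * dcoef k t ν = 0 := by
    intro ν hν
    rw [fus_vanish k l1 l2 ν p t hp hν, zero_mul, zero_mul]
  rw [sum_parity_reindex k p hp1 (le_trans hp1 hk) _ hvan]
  have hterm : ∀ j ∈ Finset.range ((k - p) / 2 + 1),
      fus k t l1 l2 (p + 2 * j) * fus k t l3 l4 (p + 2 * j) * dcoef k t (p + 2 * j)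
      = t ^ ((δ1 / 2 - j) + (j - δ2 / 2) + ((δ3 / 2 - j) + (j - δ4 / 2)))
          * dcoef k t (p + 2 * j) := by
    intro j hj
    rw [term_eval k l1 l2 p j δ1 δ2 t h1 h2 hδ1 hδ2 hp,
        term_eval k l3 l4 p j δ3 δ4 t h3 h4 hδ3 hδ4 (by omega), ← pow_add]
  rw [Finset.sum_congr rfl hterm]
  clear hterm hvan hδ1 hδ2 hδ3 hδ4 hpar h1 h2 h3 h4 hp
  obtain ⟨N, hN⟩ : ∃ N, N = (k - p) / 2 := ⟨_, rfl⟩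
  rw [← hN]
  obtain ⟨a1, ha1⟩ : ∃ a, δ1 = p + 2 * a := ⟨δ1 / 2, by omega⟩
  obtain ⟨a2, ha2⟩ : ∃ a, δ3 = p + 2 * a := ⟨δ3 / 2, by omega⟩
  obtain ⟨b1, hb1⟩ : ∃ b, δ2 = p + 2 * b := ⟨δ2 / 2, by omega⟩
  obtain ⟨b2, hb2⟩ : ∃ b, δ4 = p + 2 * b := ⟨δ4 / 2, by omega⟩
  obtain ⟨m1, m2, m3, m4, hm1, hm2, hm3, hm4, h12, h23, h34, h4N, hF⟩ :=
    bridge p δ1 δ2 δ3 δ4 L1 L2 L3 L4 a1 a2 b1 b2 k N hL1 hL2 hL3 hL4 ha1 ha2 hb1 hb2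
      hL d12 d34 d2k d4k hN hp1
  clear hL1 hL2 hL3 hL4 hL d1p d2p d3p d4p d12 d34 d2k d4k
  have hexp : ∀ j ∈ Finset.range (N + 1),
      t ^ ((δ1 / 2 - j) + (j - δ2 / 2) + ((δ3 / 2 - j) + (j - δ4 / 2)))
          * dcoef k t (p + 2 * j)
      = t ^ (m1 - j + (m2 - j) + (j - m3) + (j - m4)) * dcoef k t (p + 2 * j) := by
    intro j hj
    rw [show δ1 / 2 = a1 from by omega, show δ2 / 2 = b1 from by omega,
        show δ3 / 2 = a2 from by omega, show δ4 / 2 = b2 from by omega, hF j]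
  rw [Finset.sum_congr rfl hexp]
  clear hexp ha1 ha2 hb1 hb2 hF
  have hd : ∀ j ∈ Finset.range (N + 1),
      t ^ (m1 - j + (m2 - j) + (j - m3) + (j - m4)) * dcoef k t (p + 2 * j)
      = t ^ (m1 - j + (m2 - j) + (j - m3) + (j - m4)) * (1 / (1 - t))
        + ((if p + 2 * j = 0 then
              t ^ (m1 - j + (m2 - j) + (j - m3) + (j - m4)) * (1 / (1 - t ^ 2) - 1 / (1 - t))
            else 0)
          + (if p + 2 * j = k then
              t ^ (m1 - j + (m2 - j) + (j - m3) + (j - m4)) * (1 / (1 - t ^ 2) - 1 / (1 - t))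
            else 0)) := by
    intro j hj
    unfold dcoef
    by_cases e0 : p + 2 * j = 0
    · rw [if_pos (Or.inl e0), if_pos e0, if_neg (by omega)]; ring
    · by_cases ek : p + 2 * j = k
      · rw [if_pos (Or.inr ek), if_neg e0, if_pos ek]; ring
      · rw [if_neg (by tauto), if_neg e0, if_neg ek]; ring
  rw [Finset.sum_congr rfl hd, Finset.sum_add_distrib, Finset.sum_add_distrib, ← Finset.sum_mul,
      core_sum t ht1 ht2 N m1 m2 m3 m4 h12 h23 h34 h4N,
      show (L3 - L2) / 2 = m3 - m2 from by omega,
      show (L1 + L2) / 2 = m2 - m1 + m1 * 2 + p from by omega,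
      show (L2 - L1) / 2 = m2 - m1 from by omega,
      show (L4 - L3) / 2 = m4 - m3 from by omega,
      show k - (L3 + L4) / 2 = m4 - m3 + (N - m4) * 2 + (k - p - 2 * N) from by omega]
  clear hd hm1 hm2 hm3 hm4
  by_cases hp0 : p = 0
  · have hS2 : ∑ j ∈ Finset.range (N + 1), (if p + 2 * j = 0 then
          t ^ (m1 - j + (m2 - j) + (j - m3) + (j - m4)) * (1 / (1 - t ^ 2) - 1 / (1 - t))
        else 0)
        = t ^ (m2 - m1 + m1 * 2) * (1 / (1 - t ^ 2) - 1 / (1 - t)) := by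
      rw [Finset.sum_eq_single_of_mem 0 (Finset.mem_range.mpr (by omega))
          (fun b _ hb => if_neg (by omega)), if_pos (by omega)]
      rw [show m1 - 0 + (m2 - 0) + (0 - m3) + (0 - m4) = m2 - m1 + m1 * 2 from by omega]
    rw [hS2]
    by_cases hr : p + 2 * N = k
    · have hS3 : ∑ j ∈ Finset.range (N + 1), (if p + 2 * j = k then
            t ^ (m1 - j + (m2 - j) + (j - m3) + (j - m4)) * (1 / (1 - t ^ 2) - 1 / (1 - t))
          else 0)
          = t ^ (m4 - m3 + (N - m4) * 2) * (1 / (1 - t ^ 2) - 1 / (1 - t)) := by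
        rw [Finset.sum_eq_single_of_mem N (Finset.mem_range.mpr (by omega))
            (fun b hb hbN => if_neg (by simp only [Finset.mem_range] at hb; omega)),
          if_pos (by omega)]
        rw [show m1 - N + (m2 - N) + (N - m3) + (N - m4) = m4 - m3 + (N - m4) * 2 from by omega]
      rw [hS3, show k - p - 2 * N = 0 from by omega, hp0]
      simp only [pow_add, pow_mul, pow_zero, mul_one]
      linear_combination alg00 t ((t ^ m1) ^ 2) (t ^ (m2 - m1)) (t ^ (m4 - m3)) ((t ^ (N - m4)) ^ 2) ((m3 - m2 : ℕ) : ℝ) ht0 h1t h1t2 hinv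
    · have hS3 : ∑ j ∈ Finset.range (N + 1), (if p + 2 * j = k then
            t ^ (m1 - j + (m2 - j) + (j - m3) + (j - m4)) * (1 / (1 - t ^ 2) - 1 / (1 - t))
          else 0) = 0 :=
        Finset.sum_eq_zero (fun b hb => if_neg (by simp only [Finset.mem_range] at hb; omega))
      rw [hS3, show k - p - 2 * N = 1 from by omega, hp0]
      simp only [pow_add, pow_mul, pow_zero, pow_one, mul_one, add_zero]
      linear_combination alg01 t ((t ^ m1) ^ 2) (t ^ (m2 - m1)) (t ^ (m4 - m3)) ((t ^ (N - m4)) ^ 2) ((m3 - m2 : ℕ) : ℝ) ht0 h1t h1t2 hinv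
  · have hS2 : ∑ j ∈ Finset.range (N + 1), (if p + 2 * j = 0 then
          t ^ (m1 - j + (m2 - j) + (j - m3) + (j - m4)) * (1 / (1 - t ^ 2) - 1 / (1 - t))
        else 0) = 0 :=
      Finset.sum_eq_zero (fun b hb => if_neg (by omega))
    rw [hS2]
    have hpe : p = 1 := by omega
    by_cases hr : p + 2 * N = k
    · have hS3 : ∑ j ∈ Finset.range (N + 1), (if p + 2 * j = k then
            t ^ (m1 - j + (m2 - j) + (j - m3) + (j - m4)) * (1 / (1 - t ^ 2) - 1 / (1 - t))
          else 0)
          = t ^ (m4 - m3 + (N - m4) * 2) * (1 / (1 - t ^ 2) - 1 / (1 - t)) := by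
        rw [Finset.sum_eq_single_of_mem N (Finset.mem_range.mpr (by omega))
            (fun b hb hbN => if_neg (by simp only [Finset.mem_range] at hb; omega)),
          if_pos (by omega)]
        rw [show m1 - N + (m2 - N) + (N - m3) + (N - m4) = m4 - m3 + (N - m4) * 2 from by omega]
      rw [hS3, show k - p - 2 * N = 0 from by omega, hpe]
      simp only [pow_add, pow_mul, pow_zero, pow_one, mul_one, zero_add]
      linear_combination alg10 t ((t ^ m1) ^ 2) (t ^ (m2 - m1)) (t ^ (m4 - m3)) ((t ^ (N - m4)) ^ 2) ((m3 - m2 : ℕ) : ℝ) ht0 h1t h1t2 hinv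
    · have hS3 : ∑ j ∈ Finset.range (N + 1), (if p + 2 * j = k then
            t ^ (m1 - j + (m2 - j) + (j - m3) + (j - m4)) * (1 / (1 - t ^ 2) - 1 / (1 - t))
          else 0) = 0 :=
        Finset.sum_eq_zero (fun b hb => if_neg (by simp only [Finset.mem_range] at hb; omega))
      rw [hS3, show k - p - 2 * N = 1 from by omega, hpe]
      simp only [pow_add, pow_mul, pow_zero, pow_one, mul_one, add_zero, zero_add]
      linear_combination alg11 t ((t ^ m1) ^ 2) (t ^ (m2 - m1)) (t ^ (m4 - m3)) ((t ^ (N - m4)) ^ 2) ((m3 - m2 : ℕ) : ℝ) ht0 h1t h1t2 hinv
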